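/- arXiv:1601.06284 — 2 statements merged into one kernel-verified Lean document; each statement's English description precedes it below -/
import Mathlib

section
/- Assume f satisfies (f1), (f2) and (f4). Then F(x,t) ≥ 0 for all (x,t) ∈ ℝ^N × ℝ. -/
open MeasureTheory Real Filter Topology
open scoped ENNReal

noncomputable section

/-- `ℝ^N` with its Euclidean structure. -/
abbrev RN (N : ℕ) := EuclideanSpace ℝ (Fin N)

/-- Squared Gagliardo seminorm `[u]² = ∬ |u(x)-u(y)|²/|x-y|^{N+2s} dx dy` (real-valued). -/
def gagSq (N : ℕ) (s : ℝ) (u : RN N → ℝ) : ℝ :=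
  ∫ p : RN N × RN N, (u p.1 - u p.2) ^ 2 / ‖p.1 - p.2‖ ^ ((N : ℝ) + 2 * s)

/-- Squared Gagliardo seminorm, extended-real-valued. -/
def gagSqE (N : ℕ) (s : ℝ) (u : RN N → ℝ) : ℝ≥0∞ :=
  ∫⁻ p : RN N × RN N, ENNReal.ofReal ((u p.1 - u p.2) ^ 2 / ‖p.1 - p.2‖ ^ ((N : ℝ) + 2 * s))

/-- The Gagliardo bilinear form `∬ (u(x)-u(y))(v(x)-v(y))/|x-y|^{N+2s} dx dy`. -/
def gagBilin (N : ℕ) (s : ℝ) (u v : RN N → ℝ) : ℝ :=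
  ∫ p : RN N × RN N, (u p.1 - u p.2) * (v p.1 - v p.2) / ‖p.1 - p.2‖ ^ ((N : ℝ) + 2 * s)

/-- Membership in the fractional Sobolev space `Hˢ(ℝᴺ)`: `u ∈ L²` and `[u] < ∞`. -/
def inHs (N : ℕ) (s : ℝ) (u : RN N → ℝ) : Prop :=
  MemLp u 2 (volume : Measure (RN N)) ∧ gagSqE N s u < ⊤

/-- Squared `Hˢ` norm `‖u‖²_{Hˢ} = [u]² + ‖u‖²_{L²}`. -/
def hsNormSq (N : ℕ) (s : ℝ) (u : RN N → ℝ) : ℝ :=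
  gagSq N s u + ∫ x : RN N, (u x) ^ 2

/-- Squared energy norm `‖u‖² = [u]² + ∫ V u² dx`. -/
def enormSq (N : ℕ) (s : ℝ) (V : RN N → ℝ) (u : RN N → ℝ) : ℝ :=
  gagSq N s u + ∫ x : RN N, V x * (u x) ^ 2

/-- The fractional critical Sobolev exponent `2*_s = 2N/(N-2s)`. -/
def twoStar (N : ℕ) (s : ℝ) : ℝ := 2 * N / (N - 2 * s)

/-- `F(x,t) = ∫₀ᵗ f(x,τ) dτ`. -/
def Fprim (N : ℕ) (f : RN N → ℝ → ℝ) (x : RN N) (t : ℝ) : ℝ := ∫ τ in (0:ℝ)..t, f x τ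

/-- `G(x,t) = f(x,t)t - 2F(x,t)`. -/
def Gfun (N : ℕ) (f : RN N → ℝ → ℝ) (x : RN N) (t : ℝ) : ℝ :=
  f x t * t - 2 * Fprim N f x t

/-- The energy functional `J(u) = ½([u]² + ∫ V u²) - ∫ F(x,u)`. -/
def Jfun (N : ℕ) (s : ℝ) (V : RN N → ℝ) (f : RN N → ℝ → ℝ) (u : RN N → ℝ) : ℝ :=
  (1/2) * enormSq N s V u - ∫ x : RN N, Fprim N f x (u x)

/-- `⟨J'(u), v⟩`. -/
def Jderiv (N : ℕ) (s : ℝ) (V : RN N → ℝ) (f : RN N → ℝ → ℝ) (u v : RN N → ℝ) : ℝ :=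
  gagBilin N s u v + (∫ x : RN N, V x * u x * v x) - ∫ x : RN N, f x (u x) * v x

/-- `u` is a weak critical point of `J`, i.e. a weak solution of `(-Δ)ˢu + Vu = f(x,u)`. -/
def IsCrit (N : ℕ) (s : ℝ) (V : RN N → ℝ) (f : RN N → ℝ → ℝ) (u : RN N → ℝ) : Prop :=
  inHs N s u ∧ ∀ v : RN N → ℝ, inHs N s v →
    gagBilin N s u v + (∫ x : RN N, V x * u x * v x) = ∫ x : RN N, f x (u x) * v x

/-- `u` is nontrivial (nonzero as an element of `Hˢ`, i.e. not a.e. zero). -/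
def Nontriv (N : ℕ) (u : RN N → ℝ) : Prop :=
  ¬ (u =ᵐ[(volume : Measure (RN N))] fun _ => (0:ℝ))

/-- (V1): `V` continuous with `0 < α ≤ V(x) ≤ β`. -/
def CondV1 (N : ℕ) (V : RN N → ℝ) (α β : ℝ) : Prop :=
  Continuous V ∧ 0 < α ∧ α ≤ β ∧ ∀ x : RN N, α ≤ V x ∧ V x ≤ β

/-- 1-periodicity in each coordinate. -/
def PeriodicZN (N : ℕ) (V : RN N → ℝ) : Prop :=
  ∀ (x : RN N) (i : Fin N), V (x + EuclideanSpace.single i 1) = V x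

/-- (f1): `f` continuous, 1-periodic in `x`, and `f(x,t)/|t|^{2*_s-1} → 0` as `|t| → ∞`,
uniformly in `x`. -/
def Condf1 (N : ℕ) (s : ℝ) (f : RN N → ℝ → ℝ) : Prop :=
  Continuous (fun p : RN N × ℝ => f p.1 p.2) ∧
  (∀ (x : RN N) (t : ℝ) (i : Fin N), f (x + EuclideanSpace.single i 1) t = f x t) ∧
  ∀ ε > (0:ℝ), ∃ M > (0:ℝ), ∀ (x : RN N) (t : ℝ), M ≤ |t| →
    |f x t| ≤ ε * |t| ^ (twoStar N s - 1)

/-- (f2): `f(x,t) = o(t)` as `|t| → 0`, uniformly in `x`. -/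
def Condf2 (N : ℕ) (f : RN N → ℝ → ℝ) : Prop :=
  ∀ ε > (0:ℝ), ∃ δ > (0:ℝ), ∀ (x : RN N) (t : ℝ), |t| ≤ δ → |f x t| ≤ ε * |t|

/-- (f3): `F(x,t)/t² → +∞` as `|t| → ∞`, uniformly in `x`. -/
def Condf3 (N : ℕ) (f : RN N → ℝ → ℝ) : Prop :=
  ∀ M : ℝ, ∃ R > (0:ℝ), ∀ (x : RN N) (t : ℝ), R ≤ |t| → M ≤ Fprim N f x t / t ^ 2

/-- (f4): `∃ λ ≥ 1` with `G(x,θt) ≤ λ G(x,t)` for all `x`, `t` and `θ ∈ [0,1]`. -/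
def Condf4 (N : ℕ) (f : RN N → ℝ → ℝ) : Prop :=
  ∃ l : ℝ, 1 ≤ l ∧ ∀ (x : RN N) (t θ : ℝ), θ ∈ Set.Icc (0:ℝ) 1 →
    Gfun N f x (θ * t) ≤ l * Gfun N f x t

/-- **Lemma (nonnegativity of `F`).** If `f` satisfies (f1), (f2) and (f4), then
`F(x,t) ≥ 0` on `ℝᴺ × ℝ`. -/
theorem Fprim_nonneg
    (N : ℕ) (s : ℝ) (hs : s ∈ Set.Ioo (0:ℝ) 1) (hN : 2 * s < (N : ℝ))
    (f : RN N → ℝ → ℝ)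
    (hf1 : Condf1 N s f) (hf2 : Condf2 N f) (hf4 : Condf4 N f) :
    ∀ (x : RN N) (t : ℝ), 0 ≤ Fprim N f x t := by
  obtain ⟨l, hl, hG⟩ := hf4
  intro x t
  have hcont : Continuous (f x) := hf1.1.comp (continuous_const.prodMk continuous_id)
  -- G is nonnegative
  have hGnn : ∀ u : ℝ, 0 ≤ Gfun N f x u := by
    intro u
    have h0 : Gfun N f x 0 = 0 := by simp [Gfun, Fprim]
    have h1 := hG x u 0 ⟨le_refl 0, zero_le_one⟩
    rw [zero_mul, h0] at h1
    nlinarith [h1, hl]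
  -- derivative of F
  have hF : ∀ u : ℝ, HasDerivAt (Fprim N f x) (f x u) u := by
    intro u
    exact intervalIntegral.integral_hasDerivAt_right
      (hcont.intervalIntegrable 0 u)
      (hcont.stronglyMeasurableAtFilter volume (nhds u)) hcont.continuousAt
  have hFc : Continuous (Fprim N f x) := by
    apply continuous_iff_continuousAt.2
    intro u; exact (hF u).continuousAt
  set h : ℝ → ℝ := fun u => Fprim N f x u / u ^ 2 with hh
  have hhd : ∀ u : ℝ, u ≠ 0 → HasDerivAt h
      ((f x u * u ^ 2 - Fprim N f x u * (2 * u ^ 1)) / (u ^ 2) ^ 2) u := by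
    intro u hu
    exact (hF u).div (hasDerivAt_pow 2 u) (pow_ne_zero 2 hu)
  have hderiv : ∀ u : ℝ, u ≠ 0 →
      deriv h u = (u * Gfun N f x u) / (u ^ 2) ^ 2 := by
    intro u hu
    rw [(hhd u hu).deriv]
    congr 1
    simp [Gfun]; ring
  have hcontOn : ∀ (Dset : Set ℝ), (0 : ℝ) ∉ Dset → ContinuousOn h Dset := by
    intro Dset hD
    apply ContinuousOn.div hFc.continuousOn (continuous_pow 2).continuousOn
    intro u hu
    exact pow_ne_zero 2 (fun h0 => hD (h0 ▸ hu))
  have hdiff : ∀ (Dset : Set ℝ), (0 : ℝ) ∉ Dset → DifferentiableOn ℝ h Dset := by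
    intro Dset hD u hu
    exact ((hhd u (fun h0 => hD (h0 ▸ hu))).differentiableAt).differentiableWithinAt
  -- the main estimate near 0
  have hbound : ∀ (ε : ℝ) (hε : (0:ℝ) < ε) (a : ℝ), a ≠ 0 →
      |a| ≤ Classical.choose (hf2 ε hε) → -ε ≤ h a := by
    intro ε hε a ha hda
    obtain ⟨hδ, hfb⟩ := Classical.choose_spec (hf2 ε hε)
    have hFb : ‖∫ τ in (0:ℝ)..a, f x τ‖ ≤ ε * |a| * |a - 0| := by
      apply intervalIntegral.norm_integral_le_of_norm_le_const
      intro σ hσ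
      have hσa : |σ| ≤ |a| := by
        rcases Set.mem_uIoc.1 hσ with h' | h'
        · rw [abs_of_pos h'.1, abs_of_nonneg (h'.1.le.trans h'.2)]; exact h'.2
        · rw [abs_of_nonpos h'.2, abs_of_neg (h'.1.trans_le h'.2)]; linarith [h'.1]
      rw [Real.norm_eq_abs]
      calc |f x σ| ≤ ε * |σ| := hfb x σ (hσa.trans hda)
        _ ≤ ε * |a| := by nlinarith
    rw [Real.norm_eq_abs, sub_zero] at hFb
    have h2 : -(ε * |a| * |a|) ≤ Fprim N f x a := by
      have := (abs_le.1 hFb).1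
      unfold Fprim
      linarith
    have ha2 : (0:ℝ) < a ^ 2 := by positivity
    have habs : |a| * |a| = a ^ 2 := by rw [abs_mul_abs_self]; ring
    rw [hh]
    dsimp only
    rw [le_div_iff₀ ha2]
    nlinarith [h2, habs]
  -- case split on sign of t
  rcases lt_trichotomy t 0 with htneg | hteq | htpos
  · -- t < 0 : h is antitone on negatives
    have key : ∀ ε > (0:ℝ), -ε ≤ h t := by
      intro ε hε
      obtain ⟨hδ, hfb⟩ := Classical.choose_spec (hf2 ε hε)
      set δ := Classical.choose (hf2 ε hε)
      set b : ℝ := max (-δ) t with hbdef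
      have hb0 : b < 0 := max_lt (by linarith) htneg
      have htb : t ≤ b := le_max_right _ _
      have hmem : (0:ℝ) ∉ Set.Icc t b := fun h0 => absurd h0.2 (not_le.2 hb0)
      have hanti : AntitoneOn h (Set.Icc t b) := by
        apply antitoneOn_of_deriv_nonpos (convex_Icc t b) (hcontOn _ hmem)
        · intro u hu
          rw [interior_Icc] at hu
          exact (hdiff (Set.Ioo t b) (fun h0 => absurd h0.2 (not_lt.2 hb0.le))
            u hu).differentiableAt (Ioo_mem_nhds hu.1 hu.2) |>.differentiableWithinAt
        · intro u hu
          rw [interior_Icc] at hu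
          have hu0 : u < 0 := hu.2.trans hb0
          rw [hderiv u hu0.ne]
          apply div_nonpos_of_nonpos_of_nonneg
          · exact mul_nonpos_of_nonpos_of_nonneg hu0.le (hGnn u)
          · positivity
      have hab : |b| ≤ δ := by
        rw [abs_of_neg hb0]
        have := le_max_left (-δ) t
        linarith [hbdef ▸ this]
      have h1 : h b ≤ h t := hanti ⟨le_refl t, htb⟩ ⟨htb, le_refl b⟩ htb
      have h2 : -ε ≤ h b := hbound ε hε b hb0.ne hab
      linarith
    have h0 : 0 ≤ h t := by
      by_contra hc
      push_neg at hc
      have := key (-(h t) / 2) (by linarith)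
      linarith
    have ht2 : (0:ℝ) < t ^ 2 := by nlinarith
    have : Fprim N f x t = h t * t ^ 2 := by
      rw [hh]; dsimp only; rw [div_mul_cancel₀ _ (ne_of_gt ht2)]
    rw [this]
    exact mul_nonneg h0 ht2.le
  · simp [hteq, Fprim]
  · -- t > 0 : h is monotone on positives
    have key : ∀ ε > (0:ℝ), -ε ≤ h t := by
      intro ε hε
      obtain ⟨hδ, hfb⟩ := Classical.choose_spec (hf2 ε hε)
      set δ := Classical.choose (hf2 ε hε)
      set a : ℝ := min δ t with hadef
      have ha0 : 0 < a := lt_min hδ htpos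
      have hat : a ≤ t := min_le_right _ _
      have hmem : (0:ℝ) ∉ Set.Icc a t := fun h0 => absurd h0.1 (not_le.2 ha0)
      have hmono : MonotoneOn h (Set.Icc a t) := by
        apply monotoneOn_of_deriv_nonneg (convex_Icc a t) (hcontOn _ hmem)
        · intro u hu
          rw [interior_Icc] at hu
          exact (hdiff (Set.Ioo a t) (fun h0 => absurd h0.1 (not_lt.2 ha0.le))
            u hu).differentiableAt (Ioo_mem_nhds hu.1 hu.2) |>.differentiableWithinAt
        · intro u hu
          rw [interior_Icc] at hu
          have hu0 : 0 < u := ha0.trans hu.1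
          rw [hderiv u hu0.ne']
          apply div_nonneg
          · exact mul_nonneg hu0.le (hGnn u)
          · positivity
      have hab : |a| ≤ δ := by
        rw [abs_of_pos ha0]
        exact min_le_left _ _
      have h1 : h a ≤ h t := hmono ⟨le_refl a, hat⟩ ⟨hat, le_refl t⟩ hat
      have h2 : -ε ≤ h a := hbound ε hε a ha0.ne' hab
      linarith
    have h0 : 0 ≤ h t := by
      by_contra hc
      push_neg at hc
      have := key (-(h t) / 2) (by linarith)
      linarith
    have ht2 : (0:ℝ) < t ^ 2 := by nlinarith
    have : Fprim N f x t = h t * t ^ 2 := by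
      rw [hh]; dsimp only; rw [div_mul_cancel₀ _ (ne_of_gt ht2)]
    rw [this]
    exact mul_nonneg h0 ht2.le


end
end

section
/- Let 𝒢 : ℝ → ℝ be continuous with 𝒢(0) = 0 and let ℐ(u) = ½[u]² − ∫_{ℝ^N} 𝒢(u) dx. Suppose u ∈ H^s(ℝ^N), u ≠ 0, satisfies 𝒢(u) ∈ L¹(ℝ^N) and the Pohozaev identity ((N−2s)/2)[u]² = N ∫_{ℝ^N} 𝒢(u) dx. Then for every t > 0, with u^t(x) = u(x/t), one has ℐ(u^t) = (½ t^{N−2s} − ((N−2s)/(2N)) t^N)[u]²; consequently ℐ(u^t) ≤ ℐ(u) for all t > 0 with equality exactly at t = 1, and ℐ(u^t) → −∞ as t → +∞. -/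
open MeasureTheory Real Filter Topology
open scoped ENNReal

noncomputable section

/-- The autonomous functional `ℐ(u) = ½[u]² - ∫ 𝒢(u) dx`. -/
def Ifun (N : ℕ) (s : ℝ) (G : ℝ → ℝ) (u : RN N → ℝ) : ℝ :=
  (1/2) * gagSq N s u - ∫ x : RN N, G (u x)

section helpers

lemma gagSq_scale (N : ℕ) (s : ℝ) (hs : 0 < s) (hN : 2 * s < (N : ℝ))
    (u : RN N → ℝ) {t : ℝ} (ht : 0 < t) :
    gagSq N s (fun x => u (t⁻¹ • x)) = t ^ ((N : ℝ) - 2 * s) * gagSq N s u := by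
  have hNpos : (0:ℝ) < N := lt_trans (by positivity) hN
  set c : ℝ := (N : ℝ) + 2 * s with hc
  set g : RN N × RN N → ℝ := fun q => (u q.1 - u q.2) ^ 2 / ‖q.1 - q.2‖ ^ c with hg
  have key : ∀ p : RN N × RN N,
      (u (t⁻¹ • p.1) - u (t⁻¹ • p.2)) ^ 2 / ‖p.1 - p.2‖ ^ c
        = t ^ (-c) * g (t⁻¹ • p) := by
    intro p
    have h1 : ‖p.1 - p.2‖ = t * ‖t⁻¹ • p.1 - t⁻¹ • p.2‖ := by
      rw [← smul_sub, norm_smul, Real.norm_eq_abs, abs_inv, abs_of_pos ht]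
      field_simp
    have h2 : (t * ‖t⁻¹ • p.1 - t⁻¹ • p.2‖) ^ c
        = t ^ c * ‖t⁻¹ • p.1 - t⁻¹ • p.2‖ ^ c :=
      Real.mul_rpow ht.le (norm_nonneg _)
    simp only [hg, Prod.smul_fst, Prod.smul_snd]
    rw [h1, h2, Real.rpow_neg ht.le, div_mul_eq_div_div_swap]
    ring
  have e1 : gagSq N s (fun x => u (t⁻¹ • x))
      = ∫ p : RN N × RN N, t ^ (-c) * g (t⁻¹ • p) := by
    unfold gagSq
    exact integral_congr_ae (Filter.Eventually.of_forall fun p => key p)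
  haveI : MeasureTheory.Measure.IsAddHaarMeasure (volume : Measure (RN N × RN N)) := by
    rw [MeasureTheory.Measure.volume_eq_prod]
    exact MeasureTheory.Measure.prod.instIsAddHaarMeasure _ _
  rw [e1, integral_const_mul, MeasureTheory.Measure.integral_comp_smul volume g t⁻¹]
  have hfr : Module.finrank ℝ (RN N × RN N) = N + N := by
    rw [Module.finrank_prod, finrank_euclideanSpace_fin]
  rw [hfr]
  have habs : |((t⁻¹ ^ (N + N) : ℝ))⁻¹| = t ^ (N + N) := by
    rw [← inv_pow, inv_inv, abs_of_pos (pow_pos ht _)]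
  rw [habs, smul_eq_mul]
  have hp : (t : ℝ) ^ (N + N) = t ^ (((N + N : ℕ) : ℝ)) := (Real.rpow_natCast t _).symm
  rw [hp, ← mul_assoc, ← Real.rpow_add ht]
  have : -c + ((N + N : ℕ) : ℝ) = (N : ℝ) - 2 * s := by push_cast [hc]; ring
  rw [this]
  rfl

lemma intG_scale (N : ℕ) (h : RN N → ℝ) {t : ℝ} (ht : 0 < t) :
    (∫ x : RN N, h (t⁻¹ • x)) = t ^ ((N : ℝ)) * ∫ x : RN N, h x := by
  rw [MeasureTheory.Measure.integral_comp_smul volume h t⁻¹, finrank_euclideanSpace_fin]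
  have habs : |((t⁻¹ ^ N : ℝ))⁻¹| = t ^ N := by
    rw [← inv_pow, inv_inv, abs_of_pos (pow_pos ht _)]
  rw [habs, smul_eq_mul, Real.rpow_natCast]

lemma gag_pos (N : ℕ) (s : ℝ) (hs : 0 < s) (hN : 2 * s < (N : ℝ))
    (u : RN N → ℝ) (hu : inHs N s u) (hne : Nontriv N u) : 0 < gagSq N s u := by
  have hNpos : (0:ℝ) < N := lt_trans (by positivity) hN
  have hNn : 0 < N := by exact_mod_cast hNpos
  haveI : Nonempty (Fin N) := ⟨⟨0, hNn⟩⟩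
  haveI : Nontrivial (RN N) := by
    refine ⟨⟨0, EuclideanSpace.single (Classical.arbitrary (Fin N)) 1, fun h => ?_⟩⟩
    have := congrArg (fun v : RN N => v (Classical.arbitrary (Fin N))) h
    simp [EuclideanSpace.single_apply] at this
  have huniv : (volume : Measure (RN N)) Set.univ = ⊤ :=
    MeasureTheory.measure_univ_of_isAddLeftInvariant volume
  have hvne : (volume : Measure (RN N)) ≠ 0 := by
    intro h
    rw [h] at huniv
    simp at huniv
  set c : ℝ := (N : ℝ) + 2 * s with hc
  have hcpos : 0 < c := by positivity
  set g : RN N × RN N → ℝ := fun q => (u q.1 - u q.2) ^ 2 / ‖q.1 - q.2‖ ^ c with hg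
  have hgnn : ∀ p, 0 ≤ g p := fun p =>
    div_nonneg (sq_nonneg _) (Real.rpow_nonneg (norm_nonneg _) _)
  have hum : AEMeasurable u (volume : Measure (RN N)) :=
    hu.1.aestronglyMeasurable.aemeasurable
  have hgm : AEMeasurable g (volume : Measure (RN N × RN N)) := by
    rw [MeasureTheory.Measure.volume_eq_prod]
    have h1 : AEMeasurable (fun p : RN N × RN N => u p.1) (volume.prod volume) := hum.comp_fst
    have h2 : AEMeasurable (fun p : RN N × RN N => u p.2) (volume.prod volume) := hum.comp_snd
    have h3 : Measurable (fun p : RN N × RN N => ‖p.1 - p.2‖ ^ c) :=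
      ((continuous_fst.sub continuous_snd).norm.rpow_const
        (fun x => Or.inr hcpos.le)).measurable
    exact ((h1.sub h2).pow_const 2).div h3.aemeasurable
  have hgint : Integrable g (volume : Measure (RN N × RN N)) := by
    refine ⟨hgm.aestronglyMeasurable, ?_⟩
    rw [MeasureTheory.hasFiniteIntegral_iff_ofReal (Filter.Eventually.of_forall hgnn)]
    exact hu.2
  by_contra hle
  push_neg at hle
  have hzero : (∫ p : RN N × RN N, g p) = 0 :=
    le_antisymm hle (integral_nonneg hgnn)
  have hg0 : g =ᵐ[(volume : Measure (RN N × RN N))] 0 :=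
    (integral_eq_zero_iff_of_nonneg hgnn hgint).1 hzero
  have hdiag : (volume : Measure (RN N × RN N)) {p : RN N × RN N | p.1 = p.2} = 0 := by
    rw [MeasureTheory.Measure.volume_eq_prod]
    have hm : MeasurableSet {p : RN N × RN N | p.1 = p.2} :=
      (isClosed_eq continuous_fst continuous_snd).measurableSet
    rw [MeasureTheory.Measure.prod_apply hm]
    have hfib : ∀ x : RN N,
        (volume : Measure (RN N)) (Prod.mk x ⁻¹' {p : RN N × RN N | p.1 = p.2}) = 0 := by
      intro x
      have : Prod.mk x ⁻¹' {p : RN N × RN N | p.1 = p.2} = {x} := by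
        ext y; simp [eq_comm]
      rw [this]
      exact measure_singleton x
    simp [hfib]
  have hne' : ∀ᵐ p : RN N × RN N ∂volume, p.1 ≠ p.2 := by
    rw [MeasureTheory.ae_iff]
    simpa using hdiag
  have hae : ∀ᵐ p : RN N × RN N ∂volume, u p.1 = u p.2 := by
    filter_upwards [hg0, hne'] with p hp hpp
    have hden : (0:ℝ) < ‖p.1 - p.2‖ ^ c :=
      Real.rpow_pos_of_pos (norm_pos_iff.2 (sub_ne_zero.2 hpp)) _
    have hp' : (u p.1 - u p.2) ^ 2 / ‖p.1 - p.2‖ ^ c = 0 := hp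
    rcases div_eq_zero_iff.1 hp' with h | h
    · exact sub_eq_zero.1 ((pow_eq_zero_iff two_ne_zero).1 h)
    · exact absurd h hden.ne'
  rw [MeasureTheory.Measure.volume_eq_prod] at hae
  have hae2 : ∀ᵐ x : RN N ∂volume, ∀ᵐ y : RN N ∂volume, u x = u y :=
    MeasureTheory.Measure.ae_ae_of_ae_prod hae
  haveI : (MeasureTheory.ae (volume : Measure (RN N))).NeBot :=
    MeasureTheory.ae_neBot.mpr hvne
  obtain ⟨x₀, hx₀⟩ := hae2.exists
  have huc : u =ᵐ[(volume : Measure (RN N))] fun _ => u x₀ :=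
    hx₀.mono fun y hy => hy.symm
  by_cases h0 : u x₀ = 0
  · exact hne (by simpa [h0] using huc)
  · have hm2 : MemLp (fun _ : RN N => u x₀) 2 (volume : Measure (RN N)) := hu.1.ae_eq huc
    have hfin := hm2.2
    rw [MeasureTheory.eLpNorm_const _ (by norm_num) hvne] at hfin
    rw [huniv] at hfin
    have h1 : ((1:ℝ) / (2:ℝ≥0∞).toReal) = (1/2 : ℝ) := by norm_num
    rw [ENNReal.top_rpow_of_pos (by norm_num)] at hfin
    rw [ENNReal.mul_top (by simpa using h0)] at hfin
    exact absurd hfin (by simp)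

lemma phi_lt {Nr s t : ℝ} (hs : 0 < s) (hN : 2 * s < Nr) (ht : 0 < t) (ht1 : t ≠ 1) :
    (1/2) * t ^ (Nr - 2*s) - ((Nr - 2*s)/(2*Nr)) * t ^ Nr < s / Nr := by
  have hNr : 0 < Nr := lt_trans (by positivity) hN
  set a : ℝ := Nr - 2*s with hadef
  have ha : 0 < a := by simp only [hadef]; linarith
  set q : ℝ := Nr / a with hqdef
  have hq : 1 < q := (one_lt_div ha).2 (by simp only [hadef]; linarith)
  set y : ℝ := t ^ a with hy
  have hy0 : 0 < y := Real.rpow_pos_of_pos ht _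
  have hyne : y ≠ 1 := by
    rcases lt_or_gt_of_ne ht1 with h | h
    · exact ne_of_lt (Real.rpow_lt_one ht.le h ha)
    · exact ne_of_gt (Real.one_lt_rpow h ha)
  have htN : t ^ Nr = y ^ q := by
    rw [hy, ← Real.rpow_mul ht.le]
    congr 1
    rw [hqdef]
    field_simp
  have hber : 1 + q * (y - 1) < y ^ q := by
    have h := one_add_mul_self_lt_rpow_one_add (s := y - 1) (by linarith)
      (sub_ne_zero.2 hyne) hq
    simpa using h
  have hkpos : 0 < a / (2*Nr) := by positivity
  have hkq : (a / (2*Nr)) * q = 1/2 := by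
    rw [hqdef]; field_simp
  have hfin : (1:ℝ)/2 - a/(2*Nr) = s / Nr := by
    rw [hadef]; field_simp; ring
  have hmul := mul_lt_mul_of_pos_left hber hkpos
  rw [htN]
  nlinarith [hmul, hkq, hfin]

end helpers

/-- If `u ≠ 0` satisfies the Pohozaev identity, then for `u^t(x) = u(x/t)` one has
`ℐ(u^t) = (½ t^{N-2s} - ((N-2s)/(2N)) t^N)[u]²`, so `ℐ(u^t) ≤ ℐ(u)` with equality
exactly at `t = 1`, and `ℐ(u^t) → -∞` as `t → ∞`. -/
theorem pohozaev_fibering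
    (N : ℕ) (s : ℝ) (hs : s ∈ Set.Ioo (0:ℝ) 1) (hN : 2 * s < (N : ℝ))
    (G : ℝ → ℝ) (hG : Continuous G) (hG0 : G 0 = 0)
    (u : RN N → ℝ) (hu : inHs N s u) (hne : Nontriv N u)
    (hint : Integrable (fun x : RN N => G (u x)) volume)
    (hpoh : (((N : ℝ) - 2 * s) / 2) * gagSq N s u = (N : ℝ) * ∫ x : RN N, G (u x)) :
    (∀ t : ℝ, 0 < t →
      Ifun N s G (fun x => u (t⁻¹ • x)) =
        ((1/2) * t ^ ((N : ℝ) - 2 * s) - (((N : ℝ) - 2 * s) / (2 * N)) * t ^ (N : ℝ)) *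
          gagSq N s u ∧
      Ifun N s G (fun x => u (t⁻¹ • x)) ≤ Ifun N s G u ∧
      (Ifun N s G (fun x => u (t⁻¹ • x)) = Ifun N s G u ↔ t = 1)) ∧
    Tendsto (fun t : ℝ => Ifun N s G (fun x => u (t⁻¹ • x))) atTop atBot := by
  obtain ⟨hs0, hs1⟩ := hs
  have hNpos : (0:ℝ) < N := lt_trans (by positivity) hN
  have hNne : (N:ℝ) ≠ 0 := hNpos.ne'
  set c0 := gagSq N s u with hc0
  have hc0pos : 0 < c0 := gag_pos N s hs0 hN u hu hne
  have hGint : (∫ x : RN N, G (u x)) = (((N:ℝ) - 2*s)/(2*(N:ℝ))) * c0 := by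
    rw [div_mul_eq_mul_div, eq_div_iff (by positivity : (0:ℝ) < 2*(N:ℝ)).ne']
    linear_combination (-2 : ℝ) * hpoh
  have hcoef : (1:ℝ)/2 - ((N:ℝ)-2*s)/(2*(N:ℝ)) = s/(N:ℝ) := by
    field_simp
    ring
  have hIu : Ifun N s G u = (s/(N:ℝ)) * c0 := by
    unfold Ifun
    rw [hGint, ← hc0]
    linear_combination c0 * hcoef
  have hform : ∀ t : ℝ, 0 < t → Ifun N s G (fun x => u (t⁻¹ • x)) =
      ((1/2) * t ^ ((N:ℝ) - 2*s) - (((N:ℝ)-2*s)/(2*(N:ℝ))) * t ^ ((N:ℝ))) * c0 := by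
    intro t ht
    have h1 := gagSq_scale N s hs0 hN u ht
    have h2 := intG_scale N (fun x => G (u x)) ht
    unfold Ifun
    rw [h1, ← hc0, h2, hGint]
    ring
  have hphi1 : (1/2) * (1:ℝ) ^ ((N:ℝ)-2*s) - (((N:ℝ)-2*s)/(2*(N:ℝ))) * (1:ℝ) ^ ((N:ℝ))
      = s/(N:ℝ) := by
    rw [Real.one_rpow, Real.one_rpow]
    linarith [hcoef]
  refine ⟨fun t ht => ⟨hform t ht, ?_, ?_⟩, ?_⟩
  · rw [hform t ht, hIu]
    rcases eq_or_ne t 1 with rfl | htne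
    · rw [hphi1]
    · exact le_of_lt (mul_lt_mul_of_pos_right (phi_lt hs0 hN ht htne) hc0pos)
  · constructor
    · intro heq
      by_contra htne
      rw [hform t ht, hIu] at heq
      exact absurd heq
        (ne_of_lt (mul_lt_mul_of_pos_right (phi_lt hs0 hN ht htne) hc0pos))
    · rintro rfl
      rw [hform 1 one_pos, hIu, hphi1]
  · set a : ℝ := (N:ℝ) - 2*s with ha
    have hapos : 0 < a := by simp only [ha]; linarith
    set k : ℝ := ((N:ℝ)-2*s)/(2*(N:ℝ)) with hk
    have hkpos : 0 < k := by
      rw [hk]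
      exact div_pos (by linarith) (by linarith)
    have h1 : Tendsto (fun t : ℝ => (k*c0) * t ^ (2*s)) atTop atTop :=
      (tendsto_rpow_atTop (by linarith)).const_mul_atTop (by positivity)
    have h2 : Tendsto (fun t : ℝ => (1/2)*c0 - (k*c0) * t ^ (2*s)) atTop atBot := by
      have h3 := tendsto_neg_atTop_atBot.comp h1
      have h4 := tendsto_atBot_add_const_left atTop ((1/2)*c0) h3
      refine h4.congr fun t => ?_
      simp [sub_eq_add_neg, Function.comp]
    have hpsi : Tendsto (fun t : ℝ => t ^ a * ((1/2)*c0 - (k*c0) * t ^ (2*s)))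
        atTop atBot := (tendsto_rpow_atTop hapos).atTop_mul_atBot₀ h2
    have heq : (fun t : ℝ => t ^ a * ((1/2)*c0 - (k*c0) * t ^ (2*s)))
        =ᶠ[atTop] (fun t : ℝ => Ifun N s G (fun x => u (t⁻¹ • x))) := by
      filter_upwards [eventually_gt_atTop (0:ℝ)] with t ht
      rw [hform t ht]
      have hsplit : t ^ ((N:ℝ)) = t ^ a * t ^ (2*s) := by
        rw [← Real.rpow_add ht]
        congr 1
        rw [ha]; ring
      rw [hsplit, hk, ha]
      ring
    exact hpsi.congr' heq

end
end
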